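/- Let w(α,k,γ) = 2 ln 2 - 2(1/2 - α)^2 - γ ln 2 · (2 - (1-α)^k). Then ln Λ(α, k, γ 2^k ln 2) < w(α,k,γ) for all α ∈ (0,1), k ≥ 2, and γ > 0. -/

import Mathlib

open Real

/-- `Λ(α,k,r) = 2 (1 - 2^{1-k} + 2^{-k}(1-α)^k)^r / (α^α (1-α)^{1-α})`. -/
noncomputable def Lam (α : ℝ) (k : ℕ) (r : ℝ) : ℝ :=
  2 * (1 - 2 ^ (1 - (k : ℝ)) + 2 ^ (-(k : ℝ)) * (1 - α) ^ k) ^ r /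
    (α ^ α * (1 - α) ^ (1 - α))



-- φ(u) = log(1+u) - log(1-u) - 2u is monotone on [0,1)
lemma phi_mono : MonotoneOn (fun u : ℝ => log (1+u) - log (1-u) - 2*u) (Set.Ico 0 1) := by
  have hint : interior (Set.Ico (0:ℝ) 1) = Set.Ioo 0 1 := interior_Ico
  have hd : ∀ u ∈ Set.Ioo (0:ℝ) 1, HasDerivAt (fun u : ℝ => log (1+u) - log (1-u) - 2*u)
      (1/(1+u) - (-1)/(1-u) - 2) u := by
    intro u hu
    have h1 : (1:ℝ)+u ≠ 0 := by nlinarith [hu.1, hu.2]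
    have h2 : (1:ℝ)-u ≠ 0 := by nlinarith [hu.1, hu.2]
    have d1 : HasDerivAt (fun u : ℝ => log (1+u)) (1/(1+u)) u := by
      have := ((hasDerivAt_id u).const_add 1).log h1
      simpa [one_div] using this
    have d2 : HasDerivAt (fun u : ℝ => log (1-u)) ((-1)/(1-u)) u := by
      have := ((hasDerivAt_id u).const_sub 1).log h2
      simpa [div_eq_mul_inv] using this
    have d3 : HasDerivAt (fun u : ℝ => 2*u) 2 u := by
      simpa using (hasDerivAt_id u).const_mul 2
    exact (d1.sub d2).sub d3
  apply monotoneOn_of_deriv_nonneg (convex_Ico 0 1)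
  · apply ContinuousOn.sub (ContinuousOn.sub ?_ ?_) (by fun_prop)
    · apply ContinuousOn.log (by fun_prop)
      intro u hu; nlinarith [hu.1, hu.2]
    · apply ContinuousOn.log (by fun_prop)
      intro u hu; nlinarith [hu.1, hu.2]
  · rw [hint]; intro u hu; exact (hd u hu).differentiableAt.differentiableWithinAt
  · rw [hint]; intro u hu
    rw [(hd u hu).deriv]
    have h1 : (0:ℝ) < 1+u := by nlinarith [hu.1, hu.2]
    have h2 : (0:ℝ) < 1-u := by nlinarith [hu.1, hu.2]
    rw [div_sub_div _ _ (ne_of_gt h1) (ne_of_gt h2)]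
    rw [sub_nonneg, le_div_iff₀ (by positivity)]
    nlinarith [hu.1, hu.2]

lemma phi_nonneg {u : ℝ} (h0 : 0 ≤ u) (h1 : u < 1) : 2*u ≤ log (1+u) - log (1-u) := by
  have := phi_mono (by simp : (0:ℝ) ∈ Set.Ico (0:ℝ) 1) (Set.mem_Ico.2 ⟨h0, h1⟩) h0
  simp at this
  linarith

-- g(u) = (1+u)log(1+u) + (1-u)log(1-u) - u² nonneg on [0,1)
lemma g_nonneg {u : ℝ} (h0 : 0 ≤ u) (h1 : u < 1) :
    u^2 ≤ (1+u) * log (1+u) + (1-u) * log (1-u) := by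
  set g : ℝ → ℝ := fun u => (1+u) * log (1+u) + (1-u) * log (1-u) - u^2 with hg
  have hmono : MonotoneOn g (Set.Ico 0 1) := by
    have hint : interior (Set.Ico (0:ℝ) 1) = Set.Ioo 0 1 := interior_Ico
    have hd : ∀ u ∈ Set.Ioo (0:ℝ) 1, HasDerivAt g
        (log (1+u) - log (1-u) - 2*u) u := by
      intro u hu
      have h1 : (0:ℝ) < 1+u := by nlinarith [hu.1, hu.2]
      have h2 : (0:ℝ) < 1-u := by nlinarith [hu.1, hu.2]
      have dl1 : HasDerivAt (fun u : ℝ => log (1+u)) (1/(1+u)) u := by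
        simpa [one_div] using ((hasDerivAt_id u).const_add 1).log h1.ne'
      have dl2 : HasDerivAt (fun u : ℝ => log (1-u)) ((-1)/(1-u)) u := by
        simpa [div_eq_mul_inv] using ((hasDerivAt_id u).const_sub 1).log h2.ne'
      have da : HasDerivAt (fun u : ℝ => (1+u) * log (1+u))
          (1 * log (1+u) + (1+u) * (1/(1+u))) u :=
        ((hasDerivAt_id u).const_add 1).mul dl1
      have db : HasDerivAt (fun u : ℝ => (1-u) * log (1-u))
          ((-1) * log (1-u) + (1-u) * ((-1)/(1-u))) u :=
        ((hasDerivAt_id u).const_sub 1).mul dl2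
      have dc : HasDerivAt (fun u : ℝ => u^2) (2*u) u := by
        simpa using hasDerivAt_pow 2 u
      have := (da.add db).sub dc
      refine this.congr_deriv ?_
      rw [mul_one_div_cancel h1.ne', mul_div_assoc', mul_neg_one, neg_div, div_self h2.ne']
      ring
    apply monotoneOn_of_deriv_nonneg (convex_Ico 0 1)
    · apply ContinuousOn.sub (ContinuousOn.add ?_ ?_) (by fun_prop)
      · exact ContinuousOn.mul (by fun_prop)
          (ContinuousOn.log (by fun_prop) (fun u hu => by nlinarith [hu.1, hu.2]))
      · exact ContinuousOn.mul (by fun_prop)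
          (ContinuousOn.log (by fun_prop) (fun u hu => by nlinarith [hu.1, hu.2]))
    · rw [hint]; intro u hu; exact (hd u hu).differentiableAt.differentiableWithinAt
    · rw [hint]; intro u hu
      rw [(hd u hu).deriv]
      have := phi_nonneg (le_of_lt hu.1) hu.2
      linarith
  have := hmono (by simp : (0:ℝ) ∈ Set.Ico (0:ℝ) 1) (Set.mem_Ico.2 ⟨h0, h1⟩) h0
  simp [hg] at this
  linarith

lemma g_nonneg' {u : ℝ} (h0 : -1 < u) (h1 : u < 1) :
    u^2 ≤ (1+u) * log (1+u) + (1-u) * log (1-u) := by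
  rcases le_or_gt 0 u with h | h
  · exact g_nonneg h h1
  · have := g_nonneg (u := -u) (by linarith) (by linarith)
    have e1 : (1:ℝ) + -u = 1 - u := by ring
    have e2 : (1:ℝ) - -u = 1 + u := by ring
    rw [e1, e2] at this
    nlinarith [this]

-- entropy bound
lemma entropy_bound {α : ℝ} (h0 : 0 < α) (h1 : α < 1) :
    2 * (α - 1/2)^2 ≤ α * log α + (1-α) * log (1-α) + log 2 := by
  have key := g_nonneg' (u := 2*α - 1) (by linarith) (by linarith)
  have e1 : (1:ℝ) + (2*α-1) = 2*α := by ring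
  have e2 : (1:ℝ) - (2*α-1) = 2*(1-α) := by ring
  rw [e1, e2, Real.log_mul (by norm_num) (ne_of_gt h0),
    Real.log_mul (by norm_num) (by nlinarith)] at key
  nlinarith [key]

/-- With `w(α,k,γ) = 2 ln 2 - 2(1/2-α)² - γ ln 2 (2 - (1-α)^k)`, we have
`ln Λ(α, k, γ 2^k ln 2) < w(α,k,γ)`. -/
theorem log_Lam_lt_w (α γ : ℝ) (k : ℕ) (hα0 : 0 < α) (hα1 : α < 1)
    (hk : 2 ≤ k) (hγ : 0 < γ) :
    Real.log (Lam α k (γ * 2 ^ k * Real.log 2)) <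
      2 * Real.log 2 - 2 * (1 / 2 - α) ^ 2 -
        γ * Real.log 2 * (2 - (1 - α) ^ k) := by
  have hl2 : (0:ℝ) < Real.log 2 := Real.log_pos (by norm_num)
  have h1α : (0:ℝ) < 1 - α := by linarith
  set c : ℝ := ((2:ℝ)^k)⁻¹ with hcdef
  have hcpos : 0 < c := by positivity
  have hck : (2:ℝ)^k * c = 1 := mul_inv_cancel₀ (by positivity)
  have hc4 : c ≤ 1/4 := by
    have h2k : (4:ℝ) ≤ 2^k := by
      calc (4:ℝ) = 2^2 := by norm_num
      _ ≤ 2^k := pow_le_pow_right₀ (by norm_num) hk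
    nlinarith
  have hc : (2:ℝ)^(-(k:ℝ)) = c := by
    rw [hcdef, Real.rpow_neg (by norm_num), Real.rpow_natCast]
  have h2c : (2:ℝ)^(1-(k:ℝ)) = 2 * c := by
    rw [show (1:ℝ)-(k:ℝ) = 1 + (-(k:ℝ)) by ring, Real.rpow_add (by norm_num),
      Real.rpow_one, hc]
  have hP0 : (0:ℝ) < (1-α)^k := pow_pos h1α k
  have hP1 : (1-α)^k < 1 := pow_lt_one₀ (le_of_lt h1α) (by linarith) (by omega)
  set t : ℝ := c * (2 - (1-α)^k) with htdef
  have ht0 : 0 < t := mul_pos hcpos (by linarith)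
  have ht2 : t ≤ 1/2 := by rw [htdef]; nlinarith
  set B : ℝ := 1 - 2 ^ (1 - (k:ℝ)) + 2 ^ (-(k:ℝ)) * (1 - α) ^ k with hBdef
  have hBt : B = 1 - t := by rw [hBdef, h2c, hc, htdef]; ring
  have hB0 : 0 < B := by rw [hBt]; linarith
  have hB1 : B ≠ 1 := by rw [hBt]; intro h; linarith
  have hlogB : Real.log B < -t := by
    have := Real.log_lt_sub_one_of_pos hB0 hB1
    rw [hBt] at this ⊢
    linarith
  set r : ℝ := γ * 2^k * Real.log 2 with hrdef
  have hr : 0 < r := by positivity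
  have hrt : r * t = γ * Real.log 2 * (2 - (1-α)^k) := by
    calc r * t = γ * Real.log 2 * (2 - (1-α)^k) * ((2:ℝ)^k * c) := by
          rw [hrdef, htdef]; ring
    _ = γ * Real.log 2 * (2 - (1-α)^k) := by rw [hck, mul_one]
  have hrB : r * Real.log B < -(γ * Real.log 2 * (2 - (1-α)^k)) := by
    have h2 : r * Real.log B < r * (-t) := mul_lt_mul_of_pos_left hlogB hr
    have h3 : r * (-t) = -(r * t) := by ring
    rw [h3, hrt] at h2
    exact h2
  have hLam : Real.log (Lam α k r) =
      Real.log 2 + r * Real.log B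
        - (α * Real.log α + (1-α) * Real.log (1-α)) := by
    simp only [Lam]
    rw [← hBdef, Real.log_div (by positivity) (by positivity),
      Real.log_mul (by norm_num) (by positivity),
      Real.log_mul (by positivity) (by positivity),
      Real.log_rpow hB0, Real.log_rpow hα0, Real.log_rpow h1α]
  have hent := entropy_bound hα0 hα1
  rw [hLam]
  have hsq : (1/2 - α)^2 = (α - 1/2)^2 := by ring
  rw [hsq]
  linarith
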